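/- Let m > 0. There exists a constant C > 0 (depending only on m) such that for all q ≥ 0 one has δE(q) ≤ C · exp(−q²/2). In particular δE is bounded on [0,∞) and δE(q) → 0 as q → ∞. -/

import Mathlib

open MeasureTheory

/-- The one-particle energy `ω(p) = √(p² + m²)`. -/
noncomputable def ω (m p : ℝ) : ℝ := Real.sqrt (p ^ 2 + m ^ 2)

/-- `Ω(p,q,θ) = √(p² + q² + 2pq cos θ + m²)` in spherical coordinates. -/
noncomputable def Ω (m p q c : ℝ) : ℝ := Real.sqrt (p ^ 2 + q ^ 2 + 2 * p * q * c + m ^ 2)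

/-- Integrand of the noncommutative second-order energy correction in spherical
coordinates (`c = cos θ`). -/
noncomputable def F (m q p c : ℝ) : ℝ :=
  p ^ 2 * Real.exp (-(10 / 3) * p ^ 2) * Real.exp (-(8 / 3) * q * p * c) *
    Real.exp (-(ω m p) * Ω m p q c + ω m p * ω m q) / (ω m p * Ω m p q c) *
    (Real.exp (Ω m p q c * ω m q) / (ω m p + Ω m p q c - ω m q) +
      Real.exp (-(Ω m p q c) * ω m q) / (ω m p + Ω m p q c + ω m q))

/-- The noncommutative second-order energy correction `δE(q)`. -/
noncomputable def δE (m q : ℝ) : ℝ :=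
  Real.exp (-(10 / 3) * q ^ 2 - 2 * m) / (16 * (2 * Real.pi) ^ 5 * ω m q) *
    ∫ p in Set.Ioi (0 : ℝ), ∫ c in (-1 : ℝ)..1, F m q p c

section Aux

open Real Set

lemma omega_lb (m p : ℝ) (hm : 0 ≤ m) : m ≤ ω m p := by
  rw [ω]
  nth_rewrite 1 [← Real.sqrt_sq hm]
  exact Real.sqrt_le_sqrt (by nlinarith [sq_nonneg p])

lemma omega_ub (m p : ℝ) (hm : 0 ≤ m) (hp : 0 ≤ p) : ω m p ≤ p + m := by
  rw [ω]
  have h := Real.sqrt_le_sqrt (show p ^ 2 + m ^ 2 ≤ (p + m) ^ 2 by nlinarith [mul_nonneg hp hm])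
  rwa [Real.sqrt_sq (by linarith)] at h

lemma le_omega (m p : ℝ) (hp : 0 ≤ p) : p ≤ ω m p := by
  rw [ω]
  have h := Real.sqrt_le_sqrt (show p ^ 2 ≤ p ^ 2 + m ^ 2 by nlinarith [sq_nonneg m])
  rwa [Real.sqrt_sq hp] at h

lemma omega_sq (m p : ℝ) : (ω m p) ^ 2 = p ^ 2 + m ^ 2 := by
  rw [ω]; exact Real.sq_sqrt (by positivity)

lemma Omega_lb (m p q c : ℝ) (hm : 0 ≤ m) (hp : 0 ≤ p) (hq : 0 ≤ q) (hc : -1 ≤ c) :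
    m ≤ Ω m p q c := by
  rw [Ω]
  nth_rewrite 1 [← Real.sqrt_sq hm]
  exact Real.sqrt_le_sqrt (by
    nlinarith [sq_nonneg (p - q), mul_nonneg (mul_nonneg hp hq) (by linarith : (0:ℝ) ≤ 1 + c)])

lemma Omega_ub (m p q c : ℝ) (hm : 0 ≤ m) (hp : 0 ≤ p) (hq : 0 ≤ q) (hc' : c ≤ 1) :
    Ω m p q c ≤ p + q + m := by
  rw [Ω]
  have h := Real.sqrt_le_sqrt (show p ^ 2 + q ^ 2 + 2 * p * q * c + m ^ 2 ≤ (p + q + m) ^ 2 by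
    nlinarith [mul_nonneg hp hq, mul_nonneg hp hm, mul_nonneg hq hm,
      mul_nonneg (mul_nonneg hp hq) (by linarith : (0:ℝ) ≤ 1 - c)])
  rwa [Real.sqrt_sq (by linarith)] at h

lemma Omega_lb' (m p q c : ℝ) (hp : 0 ≤ p) (hq : 0 ≤ q) (hc : -1 ≤ c) :
    Real.sqrt ((p - q) ^ 2 + m ^ 2) ≤ Ω m p q c := by
  rw [Ω]
  exact Real.sqrt_le_sqrt (by
    nlinarith [mul_nonneg (mul_nonneg hp hq) (by linarith : (0:ℝ) ≤ 1 + c)])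

lemma den_lb (m p q c : ℝ) (hm : 0 < m) (hp : 0 ≤ p) (hq : 0 ≤ q) (hc : -1 ≤ c) :
    m ^ 2 / (2 * (p + m)) ≤ ω m p + Ω m p q c - ω m q := by
  set s := Real.sqrt ((p - q) ^ 2 + m ^ 2) with hs_def
  have hs2 : s ^ 2 = (p - q) ^ 2 + m ^ 2 := Real.sq_sqrt (by positivity)
  have hs0 : 0 ≤ s := Real.sqrt_nonneg _
  have h1 : ω m q ≤ p + s := by
    rw [ω]
    have h := Real.sqrt_le_sqrt (show q ^ 2 + m ^ 2 ≤ (p + s) ^ 2 by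
      nlinarith [mul_nonneg hp (show 0 ≤ p - q + s by nlinarith)])
    rwa [Real.sqrt_sq (by linarith)] at h
  have h2 : m ^ 2 / (2 * (p + m)) ≤ ω m p - p := by
    rw [div_le_iff₀ (by positivity)]
    have hub := omega_ub m p hm.le hp
    have hlb := le_omega m p hp
    have hsq := omega_sq m p
    nlinarith
  have h3 := Omega_lb' m p q c hp hq hc
  linarith

lemma bracket_nonneg (wp wq W : ℝ) (hD1 : 0 < wp + W - wq) (hD2 : 0 < wp + W + wq) :
    0 ≤ Real.exp (W * wq) / (wp + W - wq) + Real.exp (-W * wq) / (wp + W + wq) := by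
  have h1 : 0 ≤ Real.exp (W * wq) / (wp + W - wq) := div_nonneg (Real.exp_pos _).le hD1.le
  have h2 : 0 ≤ Real.exp (-W * wq) / (wp + W + wq) := div_nonneg (Real.exp_pos _).le hD2.le
  linarith

lemma F_le_aux (m q p c wp wq W : ℝ) (hm : 0 < m) (hq : 0 ≤ q) (hp : 0 ≤ p)
    (hc : -1 ≤ c)
    (hwp1 : m ≤ wp) (hwp2 : wp ≤ p + m)
    (hwq1 : m ≤ wq) (hwq2 : wq ≤ q + m)
    (hW1 : m ≤ W) (hW2 : W ≤ p + q + m)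
    (hD : m ^ 2 / (2 * (p + m)) ≤ wp + W - wq) :
    p ^ 2 * Real.exp (-(10 / 3) * p ^ 2) * Real.exp (-(8 / 3) * q * p * c) *
      Real.exp (-wp * W + wp * wq) / (wp * W) *
      (Real.exp (W * wq) / (wp + W - wq) + Real.exp (-W * wq) / (wp + W + wq)) ≤
    4 / m ^ 4 * Real.exp (33 / 12 * q ^ 2 + 59 * m ^ 2) *
      (p ^ 2 * (p + m) * Real.exp (-(1 / 30) * p ^ 2)) := by
  have hDpos : 0 < wp + W - wq := lt_of_lt_of_le (by positivity) hD
  have hD2pos : 0 < wp + W + wq := by nlinarith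
  have key : 1 / (wp + W - wq) ≤ 2 * (p + m) / m ^ 2 := by
    rw [div_le_div_iff₀ hDpos (by positivity)]
    have h := (div_le_iff₀ (by positivity : (0:ℝ) < 2 * (p + m))).mp hD
    nlinarith
  have key2 : 1 / (wp + W + wq) ≤ 2 * (p + m) / m ^ 2 :=
    le_trans (by apply one_div_le_one_div_of_le hDpos; nlinarith) key
  have hS : Real.exp (W * wq) / (wp + W - wq) + Real.exp (-W * wq) / (wp + W + wq) ≤
      4 * (p + m) / m ^ 2 * Real.exp (W * wq) := by
    have h1 : Real.exp (W * wq) / (wp + W - wq) ≤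
        Real.exp (W * wq) * (2 * (p + m) / m ^ 2) := by
      rw [div_eq_mul_one_div]
      exact mul_le_mul_of_nonneg_left key (Real.exp_pos _).le
    have h2 : Real.exp (-W * wq) / (wp + W + wq) ≤
        Real.exp (W * wq) * (2 * (p + m) / m ^ 2) := by
      rw [div_eq_mul_one_div]
      exact mul_le_mul (Real.exp_le_exp.2 (by nlinarith)) key2 (by positivity)
        (Real.exp_pos _).le
    have e : 4 * (p + m) / m ^ 2 * Real.exp (W * wq) =
        Real.exp (W * wq) * (2 * (p + m) / m ^ 2) +
        Real.exp (W * wq) * (2 * (p + m) / m ^ 2) := by ring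
    linarith
  have hfront : p ^ 2 * Real.exp (-(10 / 3) * p ^ 2) * Real.exp (-(8 / 3) * q * p * c) *
      Real.exp (-wp * W + wp * wq) / (wp * W) ≤
      p ^ 2 * Real.exp (-(10 / 3) * p ^ 2 + (8 / 3 * p * q + wp * wq)) / m ^ 2 := by
    have hnum : p ^ 2 * Real.exp (-(10 / 3) * p ^ 2) * Real.exp (-(8 / 3) * q * p * c) *
        Real.exp (-wp * W + wp * wq) =
        p ^ 2 * Real.exp (-(10 / 3) * p ^ 2 + (-(8 / 3) * q * p * c + (-wp * W + wp * wq))) := by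
      rw [Real.exp_add (-(10 / 3) * p ^ 2) (-(8 / 3) * q * p * c + (-wp * W + wp * wq)),
        Real.exp_add (-(8 / 3) * q * p * c) (-wp * W + wp * wq)]
      ring
    rw [hnum]
    apply div_le_div₀ (by positivity)
    · apply mul_le_mul_of_nonneg_left _ (by positivity)
      apply Real.exp_le_exp.2
      nlinarith [mul_nonneg (mul_nonneg hq hp) (by linarith : (0:ℝ) ≤ 1 + c),
        mul_nonneg (by linarith : (0:ℝ) ≤ wp) (by linarith : (0:ℝ) ≤ W)]
    · positivity
    · nlinarith
  have hSnn := bracket_nonneg wp wq W hDpos hD2pos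
  calc p ^ 2 * Real.exp (-(10 / 3) * p ^ 2) * Real.exp (-(8 / 3) * q * p * c) *
      Real.exp (-wp * W + wp * wq) / (wp * W) *
      (Real.exp (W * wq) / (wp + W - wq) + Real.exp (-W * wq) / (wp + W + wq))
      ≤ (p ^ 2 * Real.exp (-(10 / 3) * p ^ 2 + (8 / 3 * p * q + wp * wq)) / m ^ 2) *
        (4 * (p + m) / m ^ 2 * Real.exp (W * wq)) :=
        mul_le_mul hfront hS hSnn (by positivity)
    _ = 4 / m ^ 4 * (p ^ 2 * (p + m)) *
        (Real.exp (-(10 / 3) * p ^ 2 + (8 / 3 * p * q + wp * wq)) * Real.exp (W * wq)) := by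
        ring
    _ = 4 / m ^ 4 * (p ^ 2 * (p + m)) *
        Real.exp (-(10 / 3) * p ^ 2 + (8 / 3 * p * q + wp * wq) + W * wq) := by
        rw [Real.exp_add (-(10 / 3) * p ^ 2 + (8 / 3 * p * q + wp * wq)) (W * wq)]
    _ ≤ 4 / m ^ 4 * (p ^ 2 * (p + m)) *
        Real.exp (33 / 12 * q ^ 2 + 59 * m ^ 2 + -(1 / 30) * p ^ 2) := by
        apply mul_le_mul_of_nonneg_left _ (by positivity)
        apply Real.exp_le_exp.2
        have hA : wp * wq ≤ (p + m) * (q + m) :=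
          mul_le_mul hwp2 hwq2 (by linarith) (by positivity)
        have hB : W * wq ≤ (p + q + m) * (q + m) :=
          mul_le_mul hW2 hwq2 (by linarith) (by positivity)
        nlinarith [sq_nonneg (7 * p - 5 * q), sq_nonneg (p - 30 * m), sq_nonneg (q - 18 * m)]
    _ = 4 / m ^ 4 * Real.exp (33 / 12 * q ^ 2 + 59 * m ^ 2) *
        (p ^ 2 * (p + m) * Real.exp (-(1 / 30) * p ^ 2)) := by
        rw [Real.exp_add (33 / 12 * q ^ 2 + 59 * m ^ 2) (-(1 / 30) * p ^ 2)]
        ring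

lemma F_nonneg (m q p c : ℝ) (hm : 0 < m) (hq : 0 ≤ q) (hp : 0 ≤ p) (hc : -1 ≤ c) :
    0 ≤ F m q p c := by
  have hD1 : 0 < ω m p + Ω m p q c - ω m q :=
    lt_of_lt_of_le (by positivity) (den_lb m p q c hm hp hq hc)
  have hwq : 0 < ω m q := lt_of_lt_of_le hm (omega_lb m q hm.le)
  have hD2 : 0 < ω m p + Ω m p q c + ω m q := by linarith
  have hwp : 0 < ω m p := lt_of_lt_of_le hm (omega_lb m p hm.le)
  have hW : 0 < Ω m p q c := lt_of_lt_of_le hm (Omega_lb m p q c hm.le hp hq hc)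
  have hbr := bracket_nonneg (ω m p) (ω m q) (Ω m p q c) hD1 hD2
  rw [F]
  apply mul_nonneg (div_nonneg (by positivity) (by positivity))
  simpa [neg_mul] using hbr

lemma F_le (m q p c : ℝ) (hm : 0 < m) (hq : 0 ≤ q) (hp : 0 ≤ p) (hc : -1 ≤ c) (hc' : c ≤ 1) :
    F m q p c ≤ 4 / m ^ 4 * Real.exp (33 / 12 * q ^ 2 + 59 * m ^ 2) *
      (p ^ 2 * (p + m) * Real.exp (-(1 / 30) * p ^ 2)) := by
  have h := F_le_aux m q p c (ω m p) (ω m q) (Ω m p q c) hm hq hp hc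
    (omega_lb m p hm.le) (omega_ub m p hm.le hp) (omega_lb m q hm.le) (omega_ub m q hm.le hq)
    (Omega_lb m p q c hm.le hp hq hc) (Omega_ub m p q c hm.le hp hq hc')
    (den_lb m p q c hm hp hq hc)
  rw [F]
  simpa [neg_mul] using h

lemma g_integrable (m : ℝ) (hm : 0 < m) :
    IntegrableOn (fun p : ℝ => p ^ 2 * (p + m) * Real.exp (-(1 / 30) * p ^ 2))
      (Set.Ioi (0 : ℝ)) := by
  have h3 : IntegrableOn (fun x : ℝ => x ^ (3 : ℝ) * Real.exp (-(1 / 30) * x ^ 2))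
      (Set.Ioi (0 : ℝ)) := integrableOn_rpow_mul_exp_neg_mul_sq (by norm_num) (by norm_num)
  have h2 : IntegrableOn (fun x : ℝ => x ^ (2 : ℝ) * Real.exp (-(1 / 30) * x ^ 2))
      (Set.Ioi (0 : ℝ)) := integrableOn_rpow_mul_exp_neg_mul_sq (by norm_num) (by norm_num)
  have hadd := h3.add (h2.const_mul m)
  apply IntegrableOn.congr_fun hadd _ measurableSet_Ioi
  intro x hx
  simp only [Pi.add_apply]
  have e3 : x ^ (3 : ℝ) = x ^ (3 : ℕ) := by
    rw [← Real.rpow_natCast x 3]; norm_num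
  have e2 : x ^ (2 : ℝ) = x ^ (2 : ℕ) := by
    rw [← Real.rpow_natCast x 2]; norm_num
  simp only [e3, e2]
  ring

end Aux

theorem stmt5 (m : ℝ) (hm : 0 < m) :
    ∃ C : ℝ, 0 < C ∧ (∀ q : ℝ, 0 ≤ q → δE m q ≤ C * Real.exp (-q ^ 2 / 2)) ∧
      (∃ M : ℝ, ∀ q ∈ Set.Ici (0 : ℝ), |δE m q| ≤ M) ∧
      Filter.Tendsto (δE m) Filter.atTop (nhds 0) := by
  classical
  set g : ℝ → ℝ := fun p => p ^ 2 * (p + m) * Real.exp (-(1 / 30) * p ^ 2) with hg_def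
  set I₀ : ℝ := ∫ p in Set.Ioi (0 : ℝ), g p with hI_def
  have hgnn : ∀ p ∈ Set.Ioi (0 : ℝ), 0 ≤ g p := by
    intro p hp
    have hp0 : (0:ℝ) < p := hp
    rw [hg_def]
    have : 0 ≤ p + m := by linarith
    positivity
  have hI0 : 0 ≤ I₀ := setIntegral_nonneg measurableSet_Ioi hgnn
  set K : ℝ := 8 / m ^ 4 * Real.exp (59 * m ^ 2) / (16 * (2 * Real.pi) ^ 5 * m) with hK_def
  have hπ : (0:ℝ) < Real.pi := Real.pi_pos
  have hKpos : 0 < K := by rw [hK_def]; positivity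
  have hωq : ∀ q : ℝ, m ≤ ω m q := fun q => omega_lb m q hm.le
  -- inner integral facts
  have hJnn : ∀ q : ℝ, 0 ≤ q → ∀ p ∈ Set.Ioi (0 : ℝ),
      0 ≤ ∫ c in (-1 : ℝ)..1, F m q p c := by
    intro q hq p hp
    rw [intervalIntegral.integral_of_le (by norm_num : (-1:ℝ) ≤ (1:ℝ))]
    exact setIntegral_nonneg measurableSet_Ioc
      fun c hc => F_nonneg m q p c hm hq (le_of_lt hp) hc.1.le
  have hnonneg : ∀ q : ℝ, 0 ≤ q → 0 ≤ δE m q := by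
    intro q hq
    rw [δE]
    have hω0 : 0 ≤ ω m q := le_trans hm.le (hωq q)
    apply mul_nonneg (div_nonneg (Real.exp_pos _).le (mul_nonneg (by positivity) hω0))
    exact setIntegral_nonneg measurableSet_Ioi (hJnn q hq)
  -- the key bound
  have key : ∀ q : ℝ, 0 ≤ q → δE m q ≤ K * I₀ * Real.exp (-q ^ 2 / 2) := by
    intro q hq
    have hwq0 : 0 < ω m q := lt_of_lt_of_le hm (hωq q)
    set A : ℝ := 4 / m ^ 4 * Real.exp (33 / 12 * q ^ 2 + 59 * m ^ 2) with hA_def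
    have hApos : 0 < A := by rw [hA_def]; positivity
    have hJle : ∀ p ∈ Set.Ioi (0 : ℝ),
        (∫ c in (-1 : ℝ)..1, F m q p c) ≤ 2 * A * g p := by
      intro p hp
      have hp0 : (0:ℝ) < p := hp
      rw [intervalIntegral.integral_of_le (by norm_num : (-1:ℝ) ≤ (1:ℝ))]
      have hb : (∫ c in Set.Ioc (-1 : ℝ) 1, F m q p c) ≤
          ∫ _c in Set.Ioc (-1 : ℝ) 1, A * g p := by
        apply integral_mono_of_nonneg
        · filter_upwards [ae_restrict_mem measurableSet_Ioc] with c hc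
          exact F_nonneg m q p c hm hq hp0.le hc.1.le
        · exact integrableOn_const measure_Ioc_lt_top.ne
        · filter_upwards [ae_restrict_mem measurableSet_Ioc] with c hc
          have := F_le m q p c hm hq hp0.le hc.1.le hc.2
          rw [hA_def, hg_def]
          exact this
      have hconst : (∫ _c in Set.Ioc (-1 : ℝ) 1, A * g p) = 2 * (A * g p) := by
        rw [setIntegral_const, Real.volume_real_Ioc]
        norm_num
      calc (∫ c in Set.Ioc (-1 : ℝ) 1, F m q p c) ≤ _ := hb
        _ = 2 * (A * g p) := hconst
        _ = 2 * A * g p := by ring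
    have hIle : (∫ p in Set.Ioi (0 : ℝ), ∫ c in (-1 : ℝ)..1, F m q p c) ≤ 2 * A * I₀ := by
      have h1 : (∫ p in Set.Ioi (0 : ℝ), ∫ c in (-1 : ℝ)..1, F m q p c) ≤
          ∫ p in Set.Ioi (0 : ℝ), 2 * A * g p := by
        apply integral_mono_of_nonneg
        · filter_upwards [ae_restrict_mem measurableSet_Ioi] with p hp using hJnn q hq p hp
        · exact (g_integrable m hm).const_mul (2 * A)
        · filter_upwards [ae_restrict_mem measurableSet_Ioi] with p hp using hJle p hp
      calc (∫ p in Set.Ioi (0 : ℝ), ∫ c in (-1 : ℝ)..1, F m q p c) ≤ _ := h1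
        _ = 2 * A * I₀ := by rw [hI_def, integral_const_mul]
    have hmono : Real.exp (-(10 / 3) * q ^ 2 - 2 * m) *
        Real.exp (33 / 12 * q ^ 2 + 59 * m ^ 2) ≤
        Real.exp (59 * m ^ 2) * Real.exp (-q ^ 2 / 2) := by
      rw [← Real.exp_add, ← Real.exp_add]
      apply Real.exp_le_exp.2
      nlinarith [sq_nonneg q]
    have hstep : Real.exp (-(10 / 3) * q ^ 2 - 2 * m) /
        (16 * (2 * Real.pi) ^ 5 * ω m q) * (2 * A) ≤ K * Real.exp (-q ^ 2 / 2) := by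
      rw [hA_def, hK_def, div_mul_eq_mul_div]
      have hrhs : 8 / m ^ 4 * Real.exp (59 * m ^ 2) / (16 * (2 * Real.pi) ^ 5 * m) *
          Real.exp (-q ^ 2 / 2) =
          8 / m ^ 4 * (Real.exp (59 * m ^ 2) * Real.exp (-q ^ 2 / 2)) /
            (16 * (2 * Real.pi) ^ 5 * m) := by ring
      have hlhs : Real.exp (-(10 / 3) * q ^ 2 - 2 * m) *
          (2 * (4 / m ^ 4 * Real.exp (33 / 12 * q ^ 2 + 59 * m ^ 2))) =
          8 / m ^ 4 * (Real.exp (-(10 / 3) * q ^ 2 - 2 * m) *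
            Real.exp (33 / 12 * q ^ 2 + 59 * m ^ 2)) := by ring
      rw [hrhs, hlhs]
      apply div_le_div₀ (by positivity)
        (mul_le_mul_of_nonneg_left hmono (by positivity)) (by positivity)
      exact mul_le_mul_of_nonneg_left (hωq q) (by positivity)
    have hpref : 0 ≤ Real.exp (-(10 / 3) * q ^ 2 - 2 * m) /
        (16 * (2 * Real.pi) ^ 5 * ω m q) :=
      div_nonneg (Real.exp_pos _).le (mul_nonneg (by positivity) hwq0.le)
    rw [δE]
    calc Real.exp (-(10 / 3) * q ^ 2 - 2 * m) / (16 * (2 * Real.pi) ^ 5 * ω m q) *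
        ∫ p in Set.Ioi (0 : ℝ), ∫ c in (-1 : ℝ)..1, F m q p c
        ≤ Real.exp (-(10 / 3) * q ^ 2 - 2 * m) / (16 * (2 * Real.pi) ^ 5 * ω m q) *
          (2 * A * I₀) := mul_le_mul_of_nonneg_left hIle hpref
      _ = Real.exp (-(10 / 3) * q ^ 2 - 2 * m) / (16 * (2 * Real.pi) ^ 5 * ω m q) *
          (2 * A) * I₀ := by ring
      _ ≤ K * Real.exp (-q ^ 2 / 2) * I₀ := mul_le_mul_of_nonneg_right hstep hI0
      _ = K * I₀ * Real.exp (-q ^ 2 / 2) := by ring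
  have hKI : 0 ≤ K * I₀ := mul_nonneg hKpos.le hI0
  refine ⟨K * I₀ + 1, by linarith, ?_, ?_, ?_⟩
  · intro q hq
    calc δE m q ≤ K * I₀ * Real.exp (-q ^ 2 / 2) := key q hq
      _ ≤ (K * I₀ + 1) * Real.exp (-q ^ 2 / 2) :=
        mul_le_mul_of_nonneg_right (by linarith) (Real.exp_pos _).le
  · refine ⟨K * I₀ + 1, fun q hq => ?_⟩
    have hq0 : (0:ℝ) ≤ q := hq
    rw [abs_of_nonneg (hnonneg q hq0)]
    calc δE m q ≤ K * I₀ * Real.exp (-q ^ 2 / 2) := key q hq0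
      _ ≤ (K * I₀ + 1) * 1 := by
        apply mul_le_mul (by linarith) ?_ (Real.exp_pos _).le (by linarith)
        rw [Real.exp_le_one_iff]
        nlinarith [sq_nonneg q]
      _ = K * I₀ + 1 := mul_one _
  · have hpow : Filter.Tendsto (fun q : ℝ => q ^ 2 / 2) Filter.atTop Filter.atTop :=
      (Filter.tendsto_pow_atTop two_ne_zero).atTop_div_const (by norm_num)
    have hneg : Filter.Tendsto (fun q : ℝ => -q ^ 2 / 2) Filter.atTop Filter.atBot := by
      have h := Filter.tendsto_neg_atTop_atBot.comp hpow
      have he : (Neg.neg ∘ fun q : ℝ => q ^ 2 / 2) = fun q : ℝ => -q ^ 2 / 2 := by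
        funext x; simp [Function.comp, neg_div]
      rwa [he] at h
    have hexp : Filter.Tendsto (fun q : ℝ => Real.exp (-q ^ 2 / 2)) Filter.atTop (nhds 0) :=
      Real.tendsto_exp_atBot.comp hneg
    have hg0 : Filter.Tendsto (fun q : ℝ => K * I₀ * Real.exp (-q ^ 2 / 2))
        Filter.atTop (nhds 0) := by
      simpa using hexp.const_mul (K * I₀)
    apply squeeze_zero'
      ((Filter.eventually_ge_atTop (0:ℝ)).mono fun q hq => hnonneg q hq)
      ((Filter.eventually_ge_atTop (0:ℝ)).mono fun q hq => key q hq)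
      hg0
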